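/- Let N ≥ 1, g₀, g₁, …, g_N ∈ ℂ and ρ ≥ 0. Let H_eq be the 2N×2N block-diagonal complex matrix whose n-th diagonal 2×2 block is H_n = [[g₀, 0],[g_n/√2, g₀/√2]]. Then the instantaneous capacity C(H_eq) = (1/(2N))·log₂ det(I_{2N} + ρ·H_eq·H_eq†) satisfies C(H_eq) = (1/(2N))·Σ_{n=1}^{N} log₂( 1 + (ρ/2)(3|g₀|² + |g_n|²) + (ρ²/2)|g₀|⁴ ). -/

import Mathlib

open Matrix

/-- the instantaneous capacity C(H_eq) = (1/(2N))·log₂ det(I + ρ·H_eq·H_eq†)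
of the equivalent channel of the Incomplete DF protocol (block-diagonal with blocks
H_n = [[g₀,0],[g_n/√2, g₀/√2]]) equals
(1/(2N))·Σₙ log₂(1 + (ρ/2)(3|g₀|² + |g_n|²) + (ρ²/2)|g₀|⁴).
(The determinant is a positive real number; its real part is used as its value.) -/
theorem incomplete_df_capacity (N : ℕ) (hN : 1 ≤ N)
    (g₀ : ℂ) (g : Fin N → ℂ) (ρ : ℝ) (hρ : 0 ≤ ρ)
    (Hn : Fin N → Matrix (Fin 2) (Fin 2) ℂ)
    (hHn : ∀ n, Hn n = !![g₀, 0; g n / (Real.sqrt 2 : ℂ), g₀ / (Real.sqrt 2 : ℂ)]) :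
    (1 / (2 * (N : ℝ))) *
        Real.logb 2 ((det (1 + (ρ : ℂ) • (blockDiagonal Hn * (blockDiagonal Hn)ᴴ))).re) =
      (1 / (2 * (N : ℝ))) * ∑ n : Fin N,
        Real.logb 2 (1 + (ρ / 2) * (3 * ‖g₀‖ ^ 2 + ‖g n‖ ^ 2)
          + (ρ ^ 2 / 2) * ‖g₀‖ ^ 4) := by
  set f : Fin N → ℝ := fun n => 1 + (ρ / 2) * (3 * ‖g₀‖ ^ 2 + ‖g n‖ ^ 2)
          + (ρ ^ 2 / 2) * ‖g₀‖ ^ 4 with hf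
  have hfpos : ∀ n, 0 < f n := by
    intro n
    have h1 : 0 ≤ (ρ / 2) * (3 * ‖g₀‖ ^ 2 + ‖g n‖ ^ 2) := by positivity
    have h2 : 0 ≤ (ρ ^ 2 / 2) * ‖g₀‖ ^ 4 := by positivity
    simp [hf]; nlinarith
  have key : ∀ n, det (1 + (ρ:ℂ) • (Hn n * (Hn n)ᴴ)) = ((f n : ℝ) : ℂ) := by
    intro n
    rw [hHn n]
    have h2 : ((Real.sqrt 2 : ℝ) : ℂ) * ((Real.sqrt 2 : ℝ) : ℂ) = 2 := by
      rw [← Complex.ofReal_mul, Real.mul_self_sqrt (by norm_num)]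
      norm_num
    simp only [Matrix.det_fin_two, Matrix.add_apply, Matrix.smul_apply, Matrix.one_apply,
      Matrix.mul_apply, Fin.sum_univ_two, Matrix.of_apply, Matrix.conjTranspose_apply, hf,
      Matrix.cons_val', Matrix.cons_val_zero, Matrix.cons_val_one, Matrix.head_cons,
      Matrix.empty_val', Matrix.cons_val_fin_one, Matrix.head_fin_const]
    simp only [smul_eq_mul, Complex.star_def, map_div₀, map_zero, Complex.conj_ofReal, if_true, if_neg (by decide : ¬(0:Fin 2) = 1), if_neg (by decide : ¬(1:Fin 2) = 0)]
    have e0 : g₀ * (starRingEnd ℂ) g₀ = ((‖g₀‖ ^ 2 : ℝ) : ℂ) := by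
      rw [Complex.mul_conj, Complex.sq_norm]
    have e1 : g n * (starRingEnd ℂ) (g n) = ((‖g n‖ ^ 2 : ℝ) : ℂ) := by
      rw [Complex.mul_conj, Complex.sq_norm]
    field_simp
    have e2 : g₀ * (starRingEnd ℂ) (g n) * (g n * (starRingEnd ℂ) g₀)
        = ((‖g₀‖ ^ 2 : ℝ) : ℂ) * ((‖g n‖ ^ 2 : ℝ) : ℂ) := by
      rw [show g₀ * (starRingEnd ℂ) (g n) * (g n * (starRingEnd ℂ) g₀)
          = (g₀ * (starRingEnd ℂ) g₀) * (g n * (starRingEnd ℂ) (g n)) from by ring, e0, e1]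
    rw [show ((Real.sqrt 2 : ℝ) : ℂ) ^ 2 = 2 by rw [sq, h2], e0, e1]
    push_cast at e2 ⊢
    linear_combination (-1 * (ρ : ℂ) ^ 2) * e2
  -- main chain
  have hbd : (1 + (ρ : ℂ) • (blockDiagonal Hn * (blockDiagonal Hn)ᴴ)) =
      blockDiagonal (fun n => 1 + (ρ:ℂ) • (Hn n * (Hn n)ᴴ)) := by
    rw [blockDiagonal_conjTranspose, ← blockDiagonal_mul, ← blockDiagonal_smul,
      ← blockDiagonal_one, ← blockDiagonal_add]; rfl
  rw [hbd, det_blockDiagonal]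
  simp only [key]
  rw [← Complex.ofReal_prod, Complex.ofReal_re]
  rw [Real.logb_prod _ _ (fun n _ => (hfpos n).ne')]
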